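/- With the notation of the Kraus-reduction construction: for L ∈ B(H) with reduced Kraus operators {Ľ_{ℓ,e}} = X(L), it holds that Σ_{ℓ,e} Ľ_{ℓ,e}* Ľ_{ℓ,e} = J*(L* L), where J* is the Hilbert–Schmidt adjoint of the injection map J. -/
import Mathlib


/-! STATEMENT 5: For the reduced Kraus operators Ľ_{ℓ,e} of L, one has
Σ_{ℓ,e} Ľ_{ℓ,e}* Ľ_{ℓ,e} = J*(L* L). -/

open Matrix
open scoped Kronecker BigOperators

noncomputable section

abbrev Mat (n : ℕ) : Type := Matrix (Fin n) (Fin n) ℂ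

/-- Partial trace over the second tensor factor. -/
def ptrG {a b : ℕ} (M : Matrix (Fin a × Fin b) (Fin a × Fin b) ℂ) :
    Matrix (Fin a) (Fin a) ℂ :=
  Matrix.of fun i j => ∑ g : Fin b, M (i, g) (j, g)

variable {K n m : ℕ} {dF dG : Fin K → ℕ}

/-- The reduction map `R : B(H) → Ǎ`, `R(X) = ⊕ₖ tr_{G,k}(Vₖ* X Vₖ)`. -/
def Rmap (V : ∀ k : Fin K, Matrix (Fin n) (Fin (dF k) × Fin (dG k)) ℂ)
    (W : ∀ k : Fin K, Matrix (Fin m) (Fin (dF k)) ℂ) (X : Mat n) : Mat m :=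
  ∑ k : Fin K, W k * ptrG ((V k)ᴴ * X * V k) * (W k)ᴴ

/-- The injection map `J : Ǎ → B(H)`, `J(ρ̌) = ⊕ₖ ρ̌ₖ ⊗ 1_{G,k}/dim H_{G,k}`. -/
def Jmap (V : ∀ k : Fin K, Matrix (Fin n) (Fin (dF k) × Fin (dG k)) ℂ)
    (W : ∀ k : Fin K, Matrix (Fin m) (Fin (dF k)) ℂ) (ρ : Mat m) : Mat n :=
  ∑ k : Fin K, V k *
    (((W k)ᴴ * ρ * W k) ⊗ₖ (((dG k : ℂ))⁻¹ • (1 : Matrix (Fin (dG k)) (Fin (dG k)) ℂ))) *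
    (V k)ᴴ

/-- The Hilbert–Schmidt adjoint of `J`, `J*(X) = ⊕ₖ tr_{G,k}(Vₖ* X Vₖ)/dim H_{G,k}`. -/
def Jstar (V : ∀ k : Fin K, Matrix (Fin n) (Fin (dF k) × Fin (dG k)) ℂ)
    (W : ∀ k : Fin K, Matrix (Fin m) (Fin (dF k)) ℂ) (X : Mat n) : Mat m :=
  ∑ k : Fin K, ((dG k : ℂ))⁻¹ • (W k * ptrG ((V k)ᴴ * X * V k) * (W k)ᴴ)

/-- Membership in the reduced algebra `Ǎ = ⊕ₖ B(H_{F,k})`: block-diagonal matrices. -/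
def IsBlockDiag (W : ∀ k : Fin K, Matrix (Fin m) (Fin (dF k)) ℂ) (ρ : Mat m) : Prop :=
  ρ = ∑ k : Fin K, (W k * (W k)ᴴ) * ρ * (W k * (W k)ᴴ)

/-- The reduced Kraus operators `Ľ_{ℓ,e} = Σ_k W_{k-e} (L^{(k-e,k)}_{ℓ,F}/√dim(H_{G,k})) W_k*`. -/
def redKraus (dG : Fin K → ℕ) (W : ∀ k : Fin K, Matrix (Fin m) (Fin (dF k)) ℂ)
    {d : ℕ} (LF : ∀ j k : Fin K, Fin d → Matrix (Fin (dF j)) (Fin (dF k)) ℂ)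
    (ℓ : Fin d) (e : ℤ) : Mat m :=
  ∑ j : Fin K, ∑ k : Fin K,
    if ((k : ℤ) - (j : ℤ) = e) then
      ((Real.sqrt (dG k) : ℂ))⁻¹ • (W j * LF j k ℓ * (W k)ᴴ)
    else 0


section AuxLemmas

lemma ptrG_kron {a b : ℕ} (A : Matrix (Fin a) (Fin a) ℂ) (B : Matrix (Fin b) (Fin b) ℂ) :
    ptrG (A ⊗ₖ B) = B.trace • A := by
  ext i j
  simp only [ptrG, Matrix.trace, Matrix.diag, Matrix.smul_apply, Matrix.kroneckerMap_apply,
    Matrix.of_apply, smul_eq_mul, Finset.sum_mul]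
  exact Finset.sum_congr rfl fun g _ => mul_comm _ _

lemma ptrG_sum {a b : ℕ} {ι : Type*} (s : Finset ι)
    (f : ι → Matrix (Fin a × Fin b) (Fin a × Fin b) ℂ) :
    ptrG (∑ i ∈ s, f i) = ∑ i ∈ s, ptrG (f i) := by
  ext i j
  simp [ptrG, Finset.sum_apply, Matrix.sum_apply]
  rw [Finset.sum_comm]

lemma kron_conjTranspose {a b c e : ℕ} (A : Matrix (Fin a) (Fin b) ℂ)
    (B : Matrix (Fin c) (Fin e) ℂ) : (A ⊗ₖ B)ᴴ = Aᴴ ⊗ₖ Bᴴ := by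
  ext ⟨i, g⟩ ⟨j, h⟩
  simp [Matrix.conjTranspose_apply, mul_comm]

lemma sandwich {a b c e f : Type*} [Fintype b] [Fintype c] [Fintype f]
    (X : Matrix a b ℂ) (Y : Matrix c e ℂ)
    (P : Matrix b f ℂ) (Q : Matrix f c ℂ) :
    (X * P) * (Q * Y) = X * (P * Q) * Y := by
  rw [Matrix.mul_assoc, ← Matrix.mul_assoc P, Matrix.mul_assoc X]

lemma aux_Tzero (W : ∀ k : Fin K, Matrix (Fin m) (Fin (dF k)) ℂ)
    (hWdisj : ∀ j k, j ≠ k → (W j)ᴴ * W k = 0) {d : ℕ}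
    (LF : ∀ j k : Fin K, Fin d → Matrix (Fin (dF j)) (Fin (dF k)) ℂ)
    (ℓ : Fin d) {j k j' k' : Fin K} (hjj : j ≠ j') :
    (((Real.sqrt (dG k) : ℂ))⁻¹ • (W j * LF j k ℓ * (W k)ᴴ))ᴴ *
      (((Real.sqrt (dG k') : ℂ))⁻¹ • (W j' * LF j' k' ℓ * (W k')ᴴ)) = 0 := by
  simp only [Matrix.conjTranspose_smul, Matrix.conjTranspose_mul,
    Matrix.conjTranspose_conjTranspose, Matrix.smul_mul, Matrix.mul_smul]
  rw [sandwich, sandwich, hWdisj j j' hjj]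
  simp

lemma aux_Tdiag (W : ∀ k : Fin K, Matrix (Fin m) (Fin (dF k)) ℂ)
    (hWortho : ∀ k, (W k)ᴴ * W k = 1) {d : ℕ}
    (LF : ∀ j k : Fin K, Fin d → Matrix (Fin (dF j)) (Fin (dF k)) ℂ)
    (ℓ : Fin d) (j k : Fin K) :
    (((Real.sqrt (dG k) : ℂ))⁻¹ • (W j * LF j k ℓ * (W k)ᴴ))ᴴ *
      (((Real.sqrt (dG k) : ℂ))⁻¹ • (W j * LF j k ℓ * (W k)ᴴ)) =
    ((dG k : ℂ))⁻¹ • (W k * (LF j k ℓ)ᴴ * LF j k ℓ * (W k)ᴴ) := by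
  simp only [Matrix.conjTranspose_smul, Matrix.conjTranspose_mul,
    Matrix.conjTranspose_conjTranspose, Matrix.smul_mul, Matrix.mul_smul]
  rw [sandwich, sandwich, hWortho j, Matrix.mul_one, smul_smul]
  congr 1
  · rw [star_inv₀, ← Complex.ofReal_natCast, Complex.star_def, Complex.conj_ofReal,
      ← mul_inv, ← Complex.ofReal_mul, Real.mul_self_sqrt (Nat.cast_nonneg _)]
  · rw [Matrix.mul_assoc (W k), ← Matrix.mul_assoc _ _ (W k)ᴴ, ← Matrix.mul_assoc]

lemma sum_swap5 {α : Type*} [AddCommMonoid α] {E : Finset ℤ} {d K' : ℕ}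
    (F : ℤ → Fin d → Fin K' → Fin K' → Fin K' → Fin K' → α) :
    ∑ e ∈ E, ∑ ℓ : Fin d, ∑ j : Fin K', ∑ k : Fin K', ∑ j' : Fin K', ∑ k' : Fin K',
        F e ℓ j k j' k'
    = ∑ ℓ : Fin d, ∑ j : Fin K', ∑ k : Fin K', ∑ j' : Fin K', ∑ k' : Fin K',
        ∑ e ∈ E, F e ℓ j k j' k' := by
  rw [Finset.sum_comm]
  refine Finset.sum_congr rfl fun ℓ _ => ?_
  rw [Finset.sum_comm]
  refine Finset.sum_congr rfl fun j _ => ?_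
  rw [Finset.sum_comm]
  refine Finset.sum_congr rfl fun k _ => ?_
  rw [Finset.sum_comm]
  refine Finset.sum_congr rfl fun j' _ => ?_
  exact Finset.sum_comm

lemma sum_rot3 {α : Type*} [AddCommMonoid α] {d K' : ℕ} (F : Fin K' → Fin K' → Fin d → α) :
    ∑ q : Fin K', ∑ j : Fin K', ∑ ℓ : Fin d, F q j ℓ
    = ∑ ℓ : Fin d, ∑ j : Fin K', ∑ q : Fin K', F q j ℓ := by
  calc ∑ q : Fin K', ∑ j : Fin K', ∑ ℓ : Fin d, F q j ℓ
      = ∑ j : Fin K', ∑ q : Fin K', ∑ ℓ : Fin d, F q j ℓ := Finset.sum_comm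
    _ = ∑ j : Fin K', ∑ ℓ : Fin d, ∑ q : Fin K', F q j ℓ :=
        Finset.sum_congr rfl fun j _ => Finset.sum_comm
    _ = ∑ ℓ : Fin d, ∑ j : Fin K', ∑ q : Fin K', F q j ℓ := Finset.sum_comm

lemma lhs_eq (W : ∀ k : Fin K, Matrix (Fin m) (Fin (dF k)) ℂ)
    (hWortho : ∀ k, (W k)ᴴ * W k = 1)
    (hWdisj : ∀ j k, j ≠ k → (W j)ᴴ * W k = 0) {d : ℕ}
    (LF : ∀ j k : Fin K, Fin d → Matrix (Fin (dF j)) (Fin (dF k)) ℂ) :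
    ∑ e ∈ Finset.Icc (-(K : ℤ) + 1) ((K : ℤ) - 1), ∑ ℓ : Fin d,
        (redKraus dG W LF ℓ e)ᴴ * redKraus dG W LF ℓ e =
    ∑ ℓ : Fin d, ∑ j : Fin K, ∑ k : Fin K,
        ((dG k : ℂ))⁻¹ • (W k * (LF j k ℓ)ᴴ * LF j k ℓ * (W k)ᴴ) := by
  classical
  have expand : ∀ (e : ℤ) (ℓ : Fin d),
      (redKraus dG W LF ℓ e)ᴴ * redKraus dG W LF ℓ e =
      ∑ j : Fin K, ∑ k : Fin K, ∑ j' : Fin K, ∑ k' : Fin K,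
        if (((k : ℤ) - (j : ℤ) = e) ∧ ((k' : ℤ) - (j' : ℤ) = e)) then
          (((Real.sqrt (dG k) : ℂ))⁻¹ • (W j * LF j k ℓ * (W k)ᴴ))ᴴ *
          (((Real.sqrt (dG k') : ℂ))⁻¹ • (W j' * LF j' k' ℓ * (W k')ᴴ))
        else 0 := by
    intro e ℓ
    have h1 : (redKraus dG W LF ℓ e)ᴴ = ∑ j : Fin K, ∑ k : Fin K,
        if ((k : ℤ) - (j : ℤ) = e) then
          (((Real.sqrt (dG k) : ℂ))⁻¹ • (W j * LF j k ℓ * (W k)ᴴ))ᴴ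
        else 0 := by
      rw [redKraus]
      simp only [Matrix.conjTranspose_sum, apply_ite (Matrix.conjTranspose),
        Matrix.conjTranspose_zero]
    rw [h1, redKraus, Finset.sum_mul]
    refine Finset.sum_congr rfl fun j _ => ?_
    rw [Finset.sum_mul]
    refine Finset.sum_congr rfl fun k _ => ?_
    rw [Finset.mul_sum]
    refine Finset.sum_congr rfl fun j' _ => ?_
    rw [Finset.mul_sum]
    refine Finset.sum_congr rfl fun k' _ => ?_
    simp only [ite_mul, mul_ite, Matrix.zero_mul, Matrix.mul_zero, ite_self, ite_and]
    split_ifs <;> rfl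
  calc ∑ e ∈ Finset.Icc (-(K : ℤ) + 1) ((K : ℤ) - 1), ∑ ℓ : Fin d,
        (redKraus dG W LF ℓ e)ᴴ * redKraus dG W LF ℓ e
      = ∑ ℓ : Fin d, ∑ j : Fin K, ∑ k : Fin K, ∑ j' : Fin K, ∑ k' : Fin K,
          ∑ e ∈ Finset.Icc (-(K : ℤ) + 1) ((K : ℤ) - 1),
          if (((k : ℤ) - (j : ℤ) = e) ∧ ((k' : ℤ) - (j' : ℤ) = e)) then
            (((Real.sqrt (dG k) : ℂ))⁻¹ • (W j * LF j k ℓ * (W k)ᴴ))ᴴ *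
            (((Real.sqrt (dG k') : ℂ))⁻¹ • (W j' * LF j' k' ℓ * (W k')ᴴ))
          else 0 := by
        rw [← sum_swap5]
        exact Finset.sum_congr rfl fun e _ => Finset.sum_congr rfl fun ℓ _ => expand e ℓ
    _ = ∑ ℓ : Fin d, ∑ j : Fin K, ∑ k : Fin K,
          ((dG k : ℂ))⁻¹ • (W k * (LF j k ℓ)ᴴ * LF j k ℓ * (W k)ᴴ) := by
        refine Finset.sum_congr rfl fun ℓ _ => Finset.sum_congr rfl fun j _ =>
          Finset.sum_congr rfl fun k _ => ?_
        rw [Finset.sum_eq_single j]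
        · have hemem : ((k : ℤ) - (j : ℤ)) ∈ Finset.Icc (-(K : ℤ) + 1) ((K : ℤ) - 1) := by
            have := j.isLt; have := k.isLt
            simp only [Finset.mem_Icc]
            omega
          have step : ∀ k' : Fin K,
              (∑ e ∈ Finset.Icc (-(K : ℤ) + 1) ((K : ℤ) - 1),
                if (((k : ℤ) - (j : ℤ) = e) ∧ ((k' : ℤ) - (j : ℤ) = e)) then
                  (((Real.sqrt (dG k) : ℂ))⁻¹ • (W j * LF j k ℓ * (W k)ᴴ))ᴴ *
                  (((Real.sqrt (dG k') : ℂ))⁻¹ • (W j * LF j k' ℓ * (W k')ᴴ))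
                else 0) =
              if k' = k then
                (((Real.sqrt (dG k) : ℂ))⁻¹ • (W j * LF j k ℓ * (W k)ᴴ))ᴴ *
                (((Real.sqrt (dG k') : ℂ))⁻¹ • (W j * LF j k' ℓ * (W k')ᴴ))
              else 0 := by
            intro k'
            simp only [ite_and]
            rw [Finset.sum_ite_eq, if_pos hemem]
            split_ifs with h1 h2 h2
            · rfl
            · exact absurd (Fin.ext (by omega)) h2
            · exact absurd (by subst h2; ring) h1
            · rfl
          simp only [step]
          rw [Finset.sum_ite_eq', if_pos (Finset.mem_univ k)]
          exact aux_Tdiag W hWortho LF ℓ j k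
        · intro b _ hb
          refine Finset.sum_eq_zero fun k' _ => Finset.sum_eq_zero fun e _ => ?_
          rw [aux_Tzero W hWdisj LF ℓ (Ne.symm hb)]
          simp
        · intro h; exact absurd (Finset.mem_univ j) h

lemma rhs_eq (V : ∀ k : Fin K, Matrix (Fin n) (Fin (dF k) × Fin (dG k)) ℂ)
    (W : ∀ k : Fin K, Matrix (Fin m) (Fin (dF k)) ℂ)
    (hVortho : ∀ k, (V k)ᴴ * V k = 1)
    (hVdisj : ∀ j k, j ≠ k → (V j)ᴴ * V k = 0)
    {d : ℕ} (L : Mat n)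
    (LF : ∀ j k : Fin K, Fin d → Matrix (Fin (dF j)) (Fin (dF k)) ℂ)
    (GG : ∀ j k : Fin K, Fin d → Matrix (Fin (dG j)) (Fin (dG k)) ℂ)
    (hL : L = ∑ j : Fin K, ∑ k : Fin K, ∑ ℓ : Fin d,
      V j * ((LF j k ℓ) ⊗ₖ (GG j k ℓ)) * (V k)ᴴ)
    (hGorth : ∀ (j k : Fin K) (ℓ f : Fin d), ℓ ≠ f → ((GG j k ℓ)ᴴ * GG j k f).trace = 0)
    (hGnorm : ∀ (j k : Fin K) (ℓ : Fin d), GG j k ℓ ≠ 0 → ((GG j k ℓ)ᴴ * GG j k ℓ).trace = 1)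
    (hpad : ∀ (j k : Fin K) (ℓ : Fin d), GG j k ℓ = 0 → LF j k ℓ = 0) :
    Jstar V W (Lᴴ * L) =
    ∑ ℓ : Fin d, ∑ j : Fin K, ∑ k : Fin K,
        ((dG k : ℂ))⁻¹ • (W k * (LF j k ℓ)ᴴ * LF j k ℓ * (W k)ᴴ) := by
  classical
  have hPq : ∀ q : Fin K, L * V q =
      ∑ j : Fin K, ∑ ℓ : Fin d, V j * ((LF j q ℓ) ⊗ₖ (GG j q ℓ)) := by
    intro q
    rw [hL, Matrix.sum_mul]
    refine Finset.sum_congr rfl fun j _ => ?_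
    rw [Matrix.sum_mul, Finset.sum_eq_single q]
    · rw [Matrix.sum_mul]
      refine Finset.sum_congr rfl fun ℓ _ => ?_
      rw [Matrix.mul_assoc, hVortho q, Matrix.mul_one]
    · intro b _ hb
      rw [Matrix.sum_mul]
      refine Finset.sum_eq_zero fun ℓ _ => ?_
      rw [Matrix.mul_assoc, hVdisj b q hb, Matrix.mul_zero]
    · intro h; exact absurd (Finset.mem_univ q) h
  have hM : ∀ q : Fin K, (V q)ᴴ * (Lᴴ * L) * V q =
      ∑ j : Fin K, ∑ ℓ : Fin d, ∑ ℓ' : Fin d,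
        ((LF j q ℓ)ᴴ * LF j q ℓ') ⊗ₖ ((GG j q ℓ)ᴴ * GG j q ℓ') := by
    intro q
    have h0 : (V q)ᴴ * (Lᴴ * L) * V q = (L * V q)ᴴ * (L * V q) := by
      simp only [Matrix.conjTranspose_mul, Matrix.mul_assoc]
    rw [h0, hPq q]
    simp only [Matrix.conjTranspose_sum, Matrix.conjTranspose_mul, kron_conjTranspose]
    rw [Matrix.sum_mul]
    refine Finset.sum_congr rfl fun j _ => ?_
    rw [Matrix.sum_mul]
    refine Finset.sum_congr rfl fun ℓ _ => ?_
    rw [Matrix.mul_sum, Finset.sum_eq_single j]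
    · rw [Matrix.mul_sum]
      refine Finset.sum_congr rfl fun ℓ' _ => ?_
      rw [sandwich, hVortho j, Matrix.mul_one, Matrix.mul_kronecker_mul]
    · intro b _ hb
      rw [Matrix.mul_sum]
      refine Finset.sum_eq_zero fun ℓ' _ => ?_
      rw [sandwich, hVdisj j b (Ne.symm hb), Matrix.mul_zero, Matrix.zero_mul]
    · intro h; exact absurd (Finset.mem_univ j) h
  have hptr : ∀ q : Fin K, ptrG ((V q)ᴴ * (Lᴴ * L) * V q) =
      ∑ j : Fin K, ∑ ℓ : Fin d, (LF j q ℓ)ᴴ * LF j q ℓ := by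
    intro q
    rw [hM q, ptrG_sum]
    refine Finset.sum_congr rfl fun j _ => ?_
    rw [ptrG_sum]
    refine Finset.sum_congr rfl fun ℓ _ => ?_
    rw [ptrG_sum]
    simp only [ptrG_kron]
    rw [Finset.sum_eq_single ℓ]
    · by_cases hg : GG j q ℓ = 0
      · rw [hpad j q ℓ hg]
        simp
      · rw [hGnorm j q ℓ hg, one_smul]
    · intro b _ hb
      rw [hGorth j q ℓ b (Ne.symm hb), zero_smul]
    · intro h; exact absurd (Finset.mem_univ ℓ) h
  rw [Jstar]
  calc ∑ q : Fin K, ((dG q : ℂ))⁻¹ • (W q * ptrG ((V q)ᴴ * (Lᴴ * L) * V q) * (W q)ᴴ)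
      = ∑ q : Fin K, ∑ j : Fin K, ∑ ℓ : Fin d,
          ((dG q : ℂ))⁻¹ • (W q * (LF j q ℓ)ᴴ * LF j q ℓ * (W q)ᴴ) := by
        refine Finset.sum_congr rfl fun q _ => ?_
        rw [hptr q]
        simp only [Matrix.mul_sum, Matrix.sum_mul, Finset.smul_sum]
        exact Finset.sum_congr rfl fun j _ => Finset.sum_congr rfl fun ℓ _ => by
          rw [← Matrix.mul_assoc]
    _ = ∑ ℓ : Fin d, ∑ j : Fin K, ∑ k : Fin K,
          ((dG k : ℂ))⁻¹ • (W k * (LF j k ℓ)ᴴ * LF j k ℓ * (W k)ᴴ) := sum_rot3 _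

end AuxLemmas

theorem reduced_Kraus_normalization
    (V : ∀ k : Fin K, Matrix (Fin n) (Fin (dF k) × Fin (dG k)) ℂ)
    (W : ∀ k : Fin K, Matrix (Fin m) (Fin (dF k)) ℂ)
    (hVortho : ∀ k, (V k)ᴴ * V k = 1)
    (hVdisj : ∀ j k, j ≠ k → (V j)ᴴ * V k = 0)
    (hVcomplete : ∑ k : Fin K, V k * (V k)ᴴ = 1)
    (hWortho : ∀ k, (W k)ᴴ * W k = 1)
    (hWdisj : ∀ j k, j ≠ k → (W j)ᴴ * W k = 0)
    (hWcomplete : ∑ k : Fin K, W k * (W k)ᴴ = 1)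
    (hdG : ∀ k, 0 < dG k)
    {d : ℕ} (L : Mat n)
    (LF : ∀ j k : Fin K, Fin d → Matrix (Fin (dF j)) (Fin (dF k)) ℂ)
    (GG : ∀ j k : Fin K, Fin d → Matrix (Fin (dG j)) (Fin (dG k)) ℂ)
    (hL : L = ∑ j : Fin K, ∑ k : Fin K, ∑ ℓ : Fin d,
      V j * ((LF j k ℓ) ⊗ₖ (GG j k ℓ)) * (V k)ᴴ)
    (hGorth : ∀ (j k : Fin K) (ℓ f : Fin d), ℓ ≠ f → ((GG j k ℓ)ᴴ * GG j k f).trace = 0)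
    (hGnorm : ∀ (j k : Fin K) (ℓ : Fin d), GG j k ℓ ≠ 0 → ((GG j k ℓ)ᴴ * GG j k ℓ).trace = 1)
    (hpad : ∀ (j k : Fin K) (ℓ : Fin d), GG j k ℓ = 0 → LF j k ℓ = 0) :
    ∑ e ∈ Finset.Icc (-(K : ℤ) + 1) ((K : ℤ) - 1), ∑ ℓ : Fin d,
        (redKraus dG W LF ℓ e)ᴴ * redKraus dG W LF ℓ e =
      Jstar V W (Lᴴ * L) := by
  rw [rhs_eq V W hVortho hVdisj L LF GG hL hGorth hGnorm hpad]
  exact lhs_eq W hWortho hWdisj LF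

end
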